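/- Let R be a finite semisimple ring and let χ be a generating character of R. Let P ⊆ R be a subset that is invariant under left and right multiplication by units, i.e., {u*a : a ∈ P} = P = {a*u : a ∈ P} for every unit u of R. Then for every b ∈ R, ∑_{a ∈ P} χ(a*b) = ∑_{a ∈ P} χ(b*a). -/

import Mathlib

open Function
set_option linter.unusedSectionVars false
set_option linter.unusedVariables false
set_option maxHeartbeats 1000000
namespace KrawAux
section Chars
variable {R : Type*} [Ring R] [Fintype R] [DecidableEq R]


variable {R : Type*} [Ring R] [Fintype R] [DecidableEq R]


/-- right-multiplication character -/
def rc (χ : AddChar R ℂˣ) (r : R) : AddChar R ℂˣ :=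
  χ.compAddMonoidHom (AddMonoidHom.mulRight r)

@[simp] lemma rc_apply (χ : AddChar R ℂˣ) (r x : R) : rc χ r x = χ (x * r) := rfl

lemma j_bijective : Bijective (fun ψ : AddChar R ℂˣ => (Units.coeHom ℂ).compAddChar ψ) := by
  constructor
  · exact MonoidHom.compAddChar_injective_right _ (fun a b h => Units.ext h)
  · intro ψc
    refine ⟨Circle.toUnits.compAddChar (AddChar.circleEquivComplex.symm ψc), ?_⟩
    have h1 : (Units.coeHom ℂ).compAddChar (Circle.toUnits.compAddChar
        (AddChar.circleEquivComplex.symm ψc))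
        = AddChar.circleEquivComplex (AddChar.circleEquivComplex.symm ψc) := by
      ext x
      simp [AddChar.circleEquivComplex, MonoidHom.compAddChar]
      rfl
    show (Units.coeHom ℂ).compAddChar _ = ψc
    rw [h1, AddEquiv.apply_symm_apply]

noncomputable instance : Fintype (AddChar R ℂˣ) :=
  @Fintype.ofFinite _ (Finite.of_injective _ j_bijective.injective)

lemma card_addChar_units : Fintype.card (AddChar R ℂˣ) = Fintype.card R := by
  rw [Fintype.card_congr (Equiv.ofBijective _ j_bijective), AddChar.card_eq]

variable (χ : AddChar R ℂˣ) (hχ : ∀ ψ : AddChar R ℂˣ, ∃ r : R, ∀ x : R, ψ x = χ (x * r))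

include hχ

lemma rc_bijective : Bijective (rc χ) := by
  rw [Fintype.bijective_iff_surjective_and_card, card_addChar_units]
  refine ⟨fun ψ => ?_, rfl⟩
  obtain ⟨r, hr⟩ := hχ ψ
  exact ⟨r, by ext x; simp [hr x]⟩

/-- right nondegeneracy -/
lemma right_nondeg {r : R} (h : ∀ x, χ (x * r) = 1) : r = 0 := by
  have : rc χ r = rc χ 0 := by ext x; simp [h x]
  exact (rc_bijective χ hχ).injective this

/-- left nondegeneracy -/
lemma left_nondeg {r : R} (h : ∀ x, χ (r * x) = 1) : r = 0 := by
  refine AddChar.forall_apply_eq_zero.mp (fun ψc => ?_)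
  obtain ⟨ψ, hψ⟩ := j_bijective.surjective ψc
  obtain ⟨s, hs⟩ := hχ ψ
  rw [← hψ]
  show ((ψ r : ℂˣ) : ℂ) = 1
  rw [hs r, h s]
  norm_num

lemma rc_inj {r s : R} (h : ∀ x, χ (x * r) = χ (x * s)) : r = s := by
  have : ∀ x, χ (x * (r - s)) = 1 := by
    intro x
    have := h x
    rw [mul_sub, AddChar.map_sub_eq_div]
    rw [this]
    exact div_self' _
  exact sub_eq_zero.mp (right_nondeg χ hχ this)


/-- The Nakayama map: σ r is the unique s with χ(r*x) = χ(x*s) for all x. -/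
noncomputable def sig (r : R) : R :=
  Classical.choose (hχ (χ.compAddMonoidHom (AddMonoidHom.mulLeft r)))

lemma sig_spec (r x : R) : χ (r * x) = χ (x * sig χ hχ r) :=
  Classical.choose_spec (hχ (χ.compAddMonoidHom (AddMonoidHom.mulLeft r))) x

lemma sig_add (r r' : R) : sig χ hχ (r + r') = sig χ hχ r + sig χ hχ r' := by
  refine rc_inj χ hχ (fun x => ?_)
  rw [← sig_spec, add_mul, mul_add, AddChar.map_add_eq_mul, AddChar.map_add_eq_mul,
    sig_spec χ hχ r x, sig_spec χ hχ r' x]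

lemma sig_mul (r s : R) : sig χ hχ (r * s) = sig χ hχ r * sig χ hχ s := by
  refine rc_inj χ hχ (fun x => ?_)
  rw [← sig_spec, mul_assoc, sig_spec χ hχ r (s * x)]
  rw [show s * x * sig χ hχ r = s * (x * sig χ hχ r) from mul_assoc _ _ _,
    sig_spec χ hχ s (x * sig χ hχ r), mul_assoc]

lemma sig_one : sig χ hχ 1 = 1 := by
  refine rc_inj χ hχ (fun x => ?_)
  rw [← sig_spec, one_mul, mul_one]

lemma sig_injective : Injective (sig χ hχ) := by
  intro r r' h
  have : ∀ x, χ ((r - r') * x) = 1 := by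
    intro x
    rw [sub_mul, AddChar.map_sub_eq_div, sig_spec χ hχ r x, sig_spec χ hχ r' x, h]
    exact div_self' _
  exact sub_eq_zero.mp (left_nondeg χ hχ this)

lemma sig_bijective : Bijective (sig χ hχ) :=
  Finite.injective_iff_bijective.mp (sig_injective χ hχ)

/-- σ as a ring equivalence. -/
noncomputable def sigEquiv : R ≃+* R :=
  { Equiv.ofBijective _ (sig_bijective χ hχ) with
    map_add' := sig_add χ hχ
    map_mul' := sig_mul χ hχ }

@[simp] lemma sigEquiv_apply (r : R) : sigEquiv χ hχ r = sig χ hχ r := rfl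

lemma sig_central {z : R} (hz : ∀ x, z * x = x * z) : sig χ hχ z = z := by
  refine rc_inj χ hχ (fun x => ?_)
  rw [← sig_spec, hz x]

end Chars
section Regular
variable {A : Type*} [Ring A]

lemma mem_span_single {x z : A} : z ∈ Ideal.span ({x} : Set A) ↔ ∃ a, a * x = z :=
  Submodule.mem_span_singleton

lemma span_single_le {x : A} {I : Ideal A} : Ideal.span {x} ≤ I ↔ x ∈ I :=
  Submodule.span_singleton_le_iff_mem x I

lemma regular_of_ss [IsSemisimpleRing A] (x : A) : ∃ y, x * (y * x) = x := by
  obtain ⟨e, he, hspan⟩ := IsSemisimpleRing.ideal_eq_span_idempotent (Ideal.span {x})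
  have hx : x ∈ Ideal.span ({e} : Set A) := hspan ▸ Ideal.subset_span rfl
  have hxe : x * e = x := by
    obtain ⟨a, ha⟩ := mem_span_single.mp hx
    rw [← ha, mul_assoc, he]
  have he' : e ∈ Ideal.span ({x} : Set A) := by rw [hspan]; exact Ideal.subset_span rfl
  obtain ⟨y, hy⟩ := mem_span_single.mp he'
  exact ⟨y, by rw [hy, hxe]⟩

variable (hreg : ∀ x : A, ∃ y, x * (y * x) = x)
include hreg

lemma span_singleton_idem (x : A) :
    ∃ e : A, IsIdempotentElem e ∧ Ideal.span {x} = Ideal.span {e} := by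
  obtain ⟨y, hy⟩ := hreg x
  refine ⟨y * x, ?_, le_antisymm (span_single_le.mpr ?_) (span_single_le.mpr ?_)⟩
  · show y * x * (y * x) = y * x
    rw [mul_assoc y x _, hy]
  · exact mem_span_single.mpr ⟨x, hy⟩
  · exact mem_span_single.mpr ⟨y, rfl⟩

lemma span_pair_idem {e : A} (he : IsIdempotentElem e) (x : A) :
    ∃ g : A, IsIdempotentElem g ∧
      Ideal.span {e} ⊔ Ideal.span {x} = Ideal.span {g} := by
  set x' := x - x * e with hx'
  have hx'e : x' * e = 0 := by
    rw [hx', sub_mul, mul_assoc, he.eq, sub_self]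
  obtain ⟨f, hf, hfspan⟩ := span_singleton_idem hreg x'
  have hfe : f * e = 0 := by
    have hfmem : f ∈ Ideal.span ({x'} : Set A) := hfspan ▸ Ideal.subset_span rfl
    obtain ⟨a, ha⟩ := mem_span_single.mp hfmem
    rw [← ha, mul_assoc, hx'e, mul_zero]
  have h1 : e * (e + f - e * f) = e := by
    rw [mul_sub, mul_add, he.eq, ← mul_assoc, he.eq]; noncomm_ring
  have h2 : f * (e + f - e * f) = f := by
    rw [mul_sub, mul_add, hf.eq, ← mul_assoc, hfe, zero_mul]; simp
  have hsup : Ideal.span ({e} : Set A) ⊔ Ideal.span {x} = Ideal.span {e} ⊔ Ideal.span {x'} := by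
    apply le_antisymm <;> refine sup_le le_sup_left (span_single_le.mpr ?_)
    · have hxx : x = x' + x * e := by rw [hx']; noncomm_ring
      rw [hxx]
      exact Submodule.add_mem _ (Submodule.mem_sup_right (Ideal.subset_span rfl))
        (Submodule.mem_sup_left (mem_span_single.mpr ⟨x, rfl⟩))
    · rw [hx']
      exact Submodule.sub_mem _ (Submodule.mem_sup_right (Ideal.subset_span rfl))
        (Submodule.mem_sup_left (mem_span_single.mpr ⟨x, rfl⟩))
  refine ⟨e + f - e * f, ?_, ?_⟩
  · show (e + f - e * f) * (e + f - e * f) = e + f - e * f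
    rw [sub_mul, add_mul, h1, h2, mul_assoc, h2]
  · rw [hsup, hfspan]
    apply le_antisymm
    · exact sup_le (span_single_le.mpr (mem_span_single.mpr ⟨e, h1⟩))
        (span_single_le.mpr (mem_span_single.mpr ⟨f, h2⟩))
    · refine span_single_le.mpr ?_
      have hg : e + f - e * f = 1 * e + (1 - e) * f := by noncomm_ring
      rw [hg]
      exact Submodule.add_mem _
        (Submodule.mem_sup_left (mem_span_single.mpr ⟨1, rfl⟩))
        (Submodule.mem_sup_right (mem_span_single.mpr ⟨1 - e, rfl⟩))

lemma ideal_idem [Fintype A] (I : Ideal A) :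
    ∃ e : A, IsIdempotentElem e ∧ I = Ideal.span {e} := by
  classical
  obtain ⟨s, hs⟩ := (IsNoetherian.noetherian I : I.FG)
  induction s using Finset.induction generalizing I with
  | empty =>
      refine ⟨0, by simp [IsIdempotentElem], ?_⟩
      rw [← hs]; rw [Finset.coe_empty, Submodule.span_empty]; exact (Submodule.span_zero_singleton A).symm
  | @insert a t ha ih =>
      obtain ⟨e, he, hespan⟩ := ih (Submodule.span A (↑t : Set A)) rfl
      obtain ⟨g, hg, hgspan⟩ := span_pair_idem hreg he a
      refine ⟨g, hg, ?_⟩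
      rw [← hs, Finset.coe_insert, Submodule.span_insert, ← hgspan, ← hespan, sup_comm]

lemma ss_of_regular [Fintype A] : IsSemisimpleRing A := by
  refine (isSemisimpleModule_iff A A).mpr ⟨fun I => ?_⟩
  obtain ⟨e, he, rfl⟩ := ideal_idem hreg I
  refine ⟨Ideal.span {1 - e}, ?_, ?_⟩
  · rw [Submodule.disjoint_def]
    intro z hz hz'
    obtain ⟨a, ha⟩ := mem_span_single.mp hz
    obtain ⟨b, hb⟩ := mem_span_single.mp hz'
    have hz1 : z * e = z := by rw [← ha, mul_assoc, he.eq]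
    have hz2 : z * e = 0 := by
      rw [← hb, mul_assoc, sub_mul, one_mul, he.eq, sub_self, mul_zero]
    rw [← hz1, hz2]
  · rw [codisjoint_iff, eq_top_iff]
    intro z _
    have hzz : z = z * e + z * (1 - e) := by noncomm_ring
    rw [hzz]
    exact Submodule.add_mem _
      (Submodule.mem_sup_left (mem_span_single.mpr ⟨z, rfl⟩))
      (Submodule.mem_sup_right (mem_span_single.mpr ⟨z, rfl⟩))

end Regular

lemma ss_mop {A : Type*} [Ring A] [Fintype A] [IsSemisimpleRing A] :
    IsSemisimpleRing Aᵐᵒᵖ := by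
  haveI : Fintype Aᵐᵒᵖ := Fintype.ofEquiv A (MulOpposite.opEquiv : A ≃ Aᵐᵒᵖ)
  refine ss_of_regular (fun x => ?_)
  obtain ⟨y, hy⟩ := regular_of_ss (A := A) x.unop
  refine ⟨MulOpposite.op y, ?_⟩
  apply MulOpposite.unop_injective
  simp only [MulOpposite.unop_mul, MulOpposite.unop_op]
  rw [mul_assoc]; exact hy


section MapIdeal
variable {A : Type*} [Ring A]

/-- image of a left ideal under a ring automorphism -/
def mapIdeal (τ : A ≃+* A) (I : Ideal A) : Ideal A where
  carrier := τ '' I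
  add_mem' := by rintro x y ⟨i, hi, rfl⟩ ⟨j, hj, rfl⟩; exact ⟨i + j, I.add_mem hi hj, map_add τ i j⟩
  zero_mem' := ⟨0, I.zero_mem, map_zero τ⟩
  smul_mem' := by
    rintro r x ⟨i, hi, rfl⟩
    exact ⟨τ.symm r * i, I.smul_mem _ hi, by
      rw [map_mul, RingEquiv.apply_symm_apply]; rfl⟩

lemma mem_mapIdeal {τ : A ≃+* A} {I : Ideal A} {x : A} :
    x ∈ mapIdeal τ I ↔ ∃ i ∈ I, τ i = x := Iff.rfl

lemma mapIdeal_mapIdeal_symm (τ : A ≃+* A) (I : Ideal A) :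
    mapIdeal τ.symm (mapIdeal τ I) = I := by
  ext x
  constructor
  · rintro ⟨y, ⟨i, hi, rfl⟩, rfl⟩
    rwa [RingEquiv.symm_apply_apply]
  · intro hx
    exact ⟨τ x, ⟨x, hx, rfl⟩, RingEquiv.symm_apply_apply τ x⟩

lemma mapIdeal_mono {τ : A ≃+* A} {I J : Ideal A} (h : I ≤ J) :
    mapIdeal τ I ≤ mapIdeal τ J := by
  rintro x ⟨i, hi, rfl⟩; exact ⟨i, h hi, rfl⟩

lemma mapIdeal_le_iff {τ : A ≃+* A} {I J : Ideal A} :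
    mapIdeal τ I ≤ mapIdeal τ J ↔ I ≤ J := by
  constructor
  · intro h
    have := mapIdeal_mono (τ := τ.symm) h
    rwa [mapIdeal_mapIdeal_symm, mapIdeal_mapIdeal_symm] at this
  · exact mapIdeal_mono

/-- mapIdeal as an order isomorphism -/
def mapIdealOrderIso (τ : A ≃+* A) : Ideal A ≃o Ideal A where
  toFun := mapIdeal τ
  invFun := mapIdeal τ.symm
  left_inv I := mapIdeal_mapIdeal_symm τ I
  right_inv I := by
    have := mapIdeal_mapIdeal_symm τ.symm I
    rwa [RingEquiv.symm_symm] at this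
  map_rel_iff' := mapIdeal_le_iff

@[simp] lemma mapIdeal_bot (τ : A ≃+* A) : mapIdeal τ (⊥ : Ideal A) = ⊥ :=
  (mapIdealOrderIso τ).map_bot

@[simp] lemma mapIdeal_top (τ : A ≃+* A) : mapIdeal τ (⊤ : Ideal A) = ⊤ :=
  (mapIdealOrderIso τ).map_top

lemma mapIdeal_sup (τ : A ≃+* A) (I J : Ideal A) :
    mapIdeal τ (I ⊔ J) = mapIdeal τ I ⊔ mapIdeal τ J :=
  (mapIdealOrderIso τ).map_sup I J

lemma mapIdeal_inf (τ : A ≃+* A) (I J : Ideal A) :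
    mapIdeal τ (I ⊓ J) = mapIdeal τ I ⊓ mapIdeal τ J :=
  (mapIdealOrderIso τ).map_inf I J

lemma mapIdeal_isCompl (τ : A ≃+* A) {I J : Ideal A} (h : IsCompl I J) :
    IsCompl (mapIdeal τ I) (mapIdeal τ J) := by
  constructor
  · rw [disjoint_iff, ← mapIdeal_inf, disjoint_iff.mp h.disjoint, mapIdeal_bot]
  · rw [codisjoint_iff, ← mapIdeal_sup, codisjoint_iff.mp h.codisjoint, mapIdeal_top]

lemma mapIdeal_span_singleton (τ : A ≃+* A) (x : A) :
    mapIdeal τ (Ideal.span {x}) = Ideal.span {τ x} := by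
  ext z
  rw [mem_mapIdeal]
  constructor
  · rintro ⟨i, hi, rfl⟩
    obtain ⟨a, ha⟩ := Submodule.mem_span_singleton.mp hi
    refine Submodule.mem_span_singleton.mpr ⟨τ a, ?_⟩
    rw [← ha]; show τ a * τ x = τ (a * x); rw [← map_mul]
  · intro hz
    obtain ⟨a, ha⟩ := Submodule.mem_span_singleton.mp hz
    refine ⟨τ.symm a * x, Submodule.smul_mem _ _ (Ideal.subset_span rfl), ?_⟩
    rw [← ha, map_mul, RingEquiv.apply_symm_apply]; rfl

lemma mapIdeal_simple (τ : A ≃+* A) {S : Ideal A} (hS : IsSimpleModule A S) :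
    IsSimpleModule A (mapIdeal τ S) := by
  rw [isSimpleModule_iff_isAtom] at hS ⊢
  constructor
  · intro h
    apply hS.1
    have := congrArg (mapIdeal τ.symm) h
    rwa [mapIdeal_mapIdeal_symm, mapIdeal_bot] at this
  · intro J hJ
    have h2 : mapIdeal τ.symm J < S := by
      have := (mapIdealOrderIso τ.symm).lt_iff_lt.mpr hJ
      rwa [show mapIdealOrderIso τ.symm (mapIdeal τ S) = S from mapIdeal_mapIdeal_symm τ S] at this
    have := hS.2 _ h2
    have := congrArg (mapIdeal τ) this
    rw [mapIdeal_bot] at this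
    rw [← this]
    have h3 := mapIdeal_mapIdeal_symm τ.symm J
    rw [RingEquiv.symm_symm] at h3
    exact h3.symm

end MapIdeal
section Equivs
variable {A : Type*} [Ring A] {M : Type*} [AddCommGroup M] [Module A M]

/-- p ⊔ q ≃ p × q for disjoint submodules -/
noncomputable def equivOfDisjoint {p q : Submodule A M} (h : Disjoint p q) :
    (↥p × ↥q) ≃ₗ[A] ↥(p ⊔ q) := by
  refine LinearEquiv.ofBijective
    { toFun := fun z => ⟨z.1.1 + z.2.1,
        Submodule.add_mem _ (Submodule.mem_sup_left z.1.2) (Submodule.mem_sup_right z.2.2)⟩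
      map_add' := by intro z w; ext; show (z.1.1 + w.1.1) + (z.2.1 + w.2.1) = (z.1.1 + z.2.1) + (w.1.1 + w.2.1); abel
      map_smul' := by intro r z; ext; show r • z.1.1 + r • z.2.1 = r • (z.1.1 + z.2.1); rw [smul_add] }
    ⟨?_, ?_⟩
  · intro z w hzw
    have h1 : z.1.1 + z.2.1 = w.1.1 + w.2.1 := congrArg Subtype.val hzw
    have h2 : z.1.1 - w.1.1 = w.2.1 - z.2.1 := by
      rw [sub_eq_sub_iff_add_eq_add, h1, add_comm]
    have hmem : z.1.1 - w.1.1 ∈ p ⊓ q := by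
      refine ⟨Submodule.sub_mem _ z.1.2 w.1.2, ?_⟩
      rw [h2]; exact Submodule.sub_mem _ w.2.2 z.2.2
    rw [disjoint_iff.mp h] at hmem
    have h3 : z.1.1 = w.1.1 := sub_eq_zero.mp ((Submodule.mem_bot A).mp hmem)
    have h4 : z.2.1 = w.2.1 := by rw [h3] at h1; exact add_left_cancel h1
    exact Prod.ext (Subtype.ext h3) (Subtype.ext h4)
  · rintro ⟨x, hx⟩
    obtain ⟨y, hy, z, hz, hyz⟩ := Submodule.mem_sup.mp hx
    exact ⟨(⟨y, hy⟩, ⟨z, hz⟩), Subtype.ext hyz⟩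

end Equivs

section Isotypic
variable {A : Type*} [Ring A] [IsSemisimpleRing A]

lemma simple_le_sSup_iso {𝒮 : Set (Ideal A)} (h𝒮 : ∀ W ∈ 𝒮, IsSimpleModule A W)
    {T : Ideal A} (hT : IsSimpleModule A T) (hle : T ≤ sSup 𝒮) :
    ∃ W ∈ 𝒮, Nonempty (↥T ≃ₗ[A] ↥W) := by
  obtain ⟨C, hC⟩ := exists_isCompl T
  set π := Submodule.linearProjOfIsCompl T C hC with hπ
  by_cases hall : ∀ W ∈ 𝒮, ∀ w ∈ W, π w = 0
  · exfalso
    have hker : sSup 𝒮 ≤ LinearMap.ker π := by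
      refine sSup_le (fun W hW => ?_)
      intro w hw
      exact LinearMap.mem_ker.mpr (hall W hW w hw)
    haveI := hT.nontrivial
    obtain ⟨t, ht⟩ := exists_ne (0 : ↥T)
    have h1 : π t.1 = t := Submodule.linearProjOfIsCompl_apply_left hC t
    have h2 : π t.1 = 0 := LinearMap.mem_ker.mp (hker (hle t.2))
    exact ht (by rw [← h1, h2])
  · push_neg at hall
    obtain ⟨W, hW, w, hw, hwne⟩ := hall
    haveI := h𝒮 W hW
    haveI := hT
    have hne : π.comp (Submodule.subtype W) ≠ 0 := by
      intro h
      apply hwne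
      have := congrFun (congrArg DFunLike.coe h) ⟨w, hw⟩
      simpa using this
    exact ⟨W, hW, ⟨(LinearEquiv.ofBijective _ (LinearMap.bijective_of_ne_zero hne)).symm⟩⟩

variable (S : Ideal A)

def isoClass : Set (Ideal A) := {T | IsSimpleModule A T ∧ Nonempty (↥T ≃ₗ[A] ↥S)}
def nonIsoClass : Set (Ideal A) := {T | IsSimpleModule A T ∧ ¬ Nonempty (↥T ≃ₗ[A] ↥S)}

lemma codisjoint_iso : sSup (isoClass S) ⊔ sSup (nonIsoClass S) = ⊤ := by
  rw [← sSup_union]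
  have : isoClass S ∪ nonIsoClass S = {T : Ideal A | IsSimpleModule A T} := by
    ext T
    simp only [isoClass, nonIsoClass, Set.mem_union, Set.mem_setOf_eq]
    tauto
  rw [this]
  exact IsSemisimpleModule.sSup_simples_eq_top A A

lemma disjoint_iso : Disjoint (sSup (isoClass S)) (sSup (nonIsoClass S)) := by
  rw [disjoint_iff]
  rcases IsSemisimpleModule.eq_bot_or_exists_simple_le (sSup (isoClass S) ⊓ sSup (nonIsoClass S))
    with h | ⟨T, hTle, hT⟩
  · exact h
  · exfalso
    obtain ⟨W, hW, ⟨e1⟩⟩ := simple_le_sSup_iso (fun W hW => hW.1) hT (hTle.trans inf_le_left)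
    obtain ⟨W', hW', ⟨e2⟩⟩ := simple_le_sSup_iso (fun W hW => hW.1) hT (hTle.trans inf_le_right)
    obtain ⟨_, ⟨e3⟩⟩ := hW
    exact hW'.2 ⟨e2.symm.trans (e1.trans e3)⟩

/-- right multiplication as a left-module endomorphism -/
def mulRightLin (r : A) : A →ₗ[A] A where
  toFun x := x * r
  map_add' x y := add_mul x y r
  map_smul' s x := mul_assoc s x r

lemma map_mulRight_simple_le {T : Ideal A} (hT : IsSimpleModule A T) (hTS : Nonempty (↥T ≃ₗ[A] ↥S))
    (r : A) : Submodule.map (mulRightLin r) T ≤ sSup (isoClass S) := by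
  set f := (mulRightLin r).comp (Submodule.subtype T) with hf
  have hrange : LinearMap.range f = Submodule.map (mulRightLin r) T := by
    rw [hf, LinearMap.range_comp, Submodule.range_subtype]
  haveI := hT
  rcases eq_or_ne (LinearMap.ker f) ⊤ with hker | hker
  · rw [← hrange, LinearMap.range_eq_bot.mpr (LinearMap.ker_eq_top.mp hker)]
    exact bot_le
  · have hker' : LinearMap.ker f = ⊥ := (eq_bot_or_eq_top _).resolve_right hker
    have hinj : Injective f := LinearMap.ker_eq_bot.mp hker'
    have e : ↥T ≃ₗ[A] ↥(Submodule.map (mulRightLin r) T) := by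
      rw [← hrange]; exact LinearEquiv.ofInjective f hinj
    refine le_sSup ?_
    obtain ⟨eTS⟩ := hTS
    exact ⟨IsSimpleModule.congr e.symm, ⟨e.symm.trans eTS⟩⟩

lemma isotypic_right_stable {a : A} (ha : a ∈ sSup (isoClass S)) (r : A) :
    a * r ∈ sSup (isoClass S) := by
  have hmap : Submodule.map (mulRightLin r) (sSup (isoClass S)) ≤ sSup (isoClass S) := by
    rw [sSup_eq_iSup', Submodule.map_iSup]
    refine iSup_le (fun T => ?_)
    refine (map_mulRight_simple_le S T.2.1 T.2.2 r).trans ?_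
    rw [← sSup_eq_iSup']
  exact hmap ⟨a, ha, rfl⟩

lemma nonisotypic_right_stable {a : A} (ha : a ∈ sSup (nonIsoClass S)) (r : A) :
    a * r ∈ sSup (nonIsoClass S) := by
  have key : ∀ T ∈ nonIsoClass S, ∀ r : A,
      Submodule.map (mulRightLin r) T ≤ sSup (nonIsoClass S) := by
    intro T hT r
    set f := (mulRightLin r).comp (Submodule.subtype T) with hf
    have hrange : LinearMap.range f = Submodule.map (mulRightLin r) T := by
      rw [hf, LinearMap.range_comp, Submodule.range_subtype]
    haveI := hT.1
    rcases eq_or_ne (LinearMap.ker f) ⊤ with hker | hker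
    · rw [← hrange, LinearMap.range_eq_bot.mpr (LinearMap.ker_eq_top.mp hker)]; exact bot_le
    · have hker' : LinearMap.ker f = ⊥ := (eq_bot_or_eq_top _).resolve_right hker
      have hinj : Injective f := LinearMap.ker_eq_bot.mp hker'
      have e : ↥T ≃ₗ[A] ↥(Submodule.map (mulRightLin r) T) := by
        rw [← hrange]; exact LinearEquiv.ofInjective f hinj
      refine le_sSup ?_
      refine ⟨IsSimpleModule.congr e.symm, fun ⟨eS⟩ => hT.2 ⟨e.trans eS⟩⟩
  have hmap : Submodule.map (mulRightLin r) (sSup (nonIsoClass S)) ≤ sSup (nonIsoClass S) := by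
    rw [sSup_eq_iSup', Submodule.map_iSup]
    refine iSup_le (fun T => ?_)
    refine (key T.1 T.2 r).trans ?_
    rw [← sSup_eq_iSup']
  exact hmap ⟨a, ha, rfl⟩

end Isotypic

section Central
variable {A : Type*} [Ring A] [IsSemisimpleRing A]

lemma exists_central_idem {S : Ideal A} (hS : IsSimpleModule A S) :
    ∃ e : A, (∀ x : A, x * e = e * x) ∧ (∀ a ∈ sSup (isoClass S), a * e = a) ∧
      e ∈ sSup (isoClass S) := by
  have hcompl : IsCompl (sSup (isoClass S)) (sSup (nonIsoClass S)) :=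
    ⟨disjoint_iso S, codisjoint_iff.mpr (codisjoint_iso S)⟩
  have h1 : (1 : A) ∈ sSup (isoClass S) ⊔ sSup (nonIsoClass S) := by
    rw [codisjoint_iff.mp hcompl.codisjoint]; trivial
  obtain ⟨e, he, e', he', hee'⟩ := Submodule.mem_sup.mp h1
  have hbot : sSup (isoClass S) ⊓ sSup (nonIsoClass S) = ⊥ := disjoint_iff.mp hcompl.disjoint
  have hrid : ∀ a ∈ sSup (isoClass S), a * e = a := by
    intro a ha
    have hae : a * e ∈ sSup (isoClass S) := Submodule.smul_mem _ a he
    have hae' : a * e' ∈ sSup (nonIsoClass S) := Submodule.smul_mem _ a he'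
    have hsplit : a = a * e + a * e' := by
      rw [← mul_add, hee', mul_one]
    have hmem : a - a * e ∈ sSup (isoClass S) ⊓ sSup (nonIsoClass S) := by
      constructor
      · exact Submodule.sub_mem _ ha hae
      · rw [sub_eq_iff_eq_add'.mpr hsplit]; exact hae'
    rw [hbot, Submodule.mem_bot] at hmem
    have := sub_eq_zero.mp hmem
    exact this.symm
  refine ⟨e, ?_, hrid, he⟩
  intro x
  have hxe : x * e ∈ sSup (isoClass S) := Submodule.smul_mem _ x he
  have hex : e * x ∈ sSup (isoClass S) := isotypic_right_stable S he x
  have hxe' : x * e' ∈ sSup (nonIsoClass S) := Submodule.smul_mem _ x he'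
  have he'x : e' * x ∈ sSup (nonIsoClass S) := nonisotypic_right_stable S he' x
  have hsum : x * e + x * e' = e * x + e' * x := by
    rw [← mul_add, hee', mul_one, ← add_mul, hee', one_mul]
  have hmem : x * e - e * x ∈ sSup (isoClass S) ⊓ sSup (nonIsoClass S) := by
    constructor
    · exact Submodule.sub_mem _ hxe hex
    · have : x * e - e * x = e' * x - x * e' := by
        rw [sub_eq_sub_iff_add_eq_add]
        calc x * e + x * e' = e * x + e' * x := hsum
        _ = e' * x + e * x := by abel
      rw [this]; exact Submodule.sub_mem _ he'x hxe'
  rw [hbot, Submodule.mem_bot] at hmem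
  exact sub_eq_zero.mp hmem

lemma simple_iso_mapIdeal (τ : A ≃+* A) (hτ : ∀ z : A, (∀ x, z * x = x * z) → τ z = z)
    {S : Ideal A} (hS : IsSimpleModule A S) :
    Nonempty (↥S ≃ₗ[A] ↥(mapIdeal τ S)) := by
  obtain ⟨e, hcent, hrid, hemem⟩ := exists_central_idem hS
  have hτe : τ e = e := hτ e (fun x => (hcent x).symm)
  have hSle : S ≤ sSup (isoClass S) := le_sSup ⟨hS, ⟨LinearEquiv.refl A _⟩⟩
  have hmaple : mapIdeal τ S ≤ sSup (isoClass S) := by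
    rintro z ⟨s, hs, rfl⟩
    have : τ s = τ s * e := by
      rw [show τ s * e = τ s * τ e by rw [hτe], ← map_mul, hrid s (hSle hs)]
    rw [this]
    exact Submodule.smul_mem _ (τ s) hemem
  obtain ⟨W, hW, ⟨e1⟩⟩ := simple_le_sSup_iso (fun W hW => hW.1) (mapIdeal_simple τ hS) hmaple
  obtain ⟨hWs, ⟨e2⟩⟩ := hW
  exact ⟨(e1.trans e2).symm⟩

lemma iso_mapIdeal_self [Fintype A] (τ : A ≃+* A)
    (hτ : ∀ z : A, (∀ x, z * x = x * z) → τ z = z) (I : Ideal A) :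
    Nonempty (↥I ≃ₗ[A] ↥(mapIdeal τ I)) := by
  induction I using WellFoundedLT.induction with
  | _ I ih =>
  rcases IsSemisimpleModule.eq_bot_or_exists_simple_le I with rfl | ⟨T, hTle, hT⟩
  · rw [mapIdeal_bot]
    exact ⟨LinearEquiv.refl A _⟩
  · obtain ⟨C₀, hC₀⟩ := exists_isCompl T
    set I₂ := C₀ ⊓ I with hI₂
    have hdisj : Disjoint T I₂ := hC₀.disjoint.mono_right inf_le_left
    have hIeq : I = T ⊔ I₂ := by
      rw [hI₂, ← sup_inf_assoc_of_le C₀ hTle, codisjoint_iff.mp hC₀.codisjoint, top_inf_eq]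
    have hTne : T ≠ ⊥ := (isSimpleModule_iff_isAtom.mp hT).1
    have hlt : I₂ < I := by
      rcases lt_or_eq_of_le (inf_le_right : I₂ ≤ I) with h | h
      · exact h
      · exfalso
        apply hTne
        have hTI₂ : T ≤ I₂ := by rw [hI₂, h]; exact hTle
        exact le_bot_iff.mp (hdisj le_rfl hTI₂)
    obtain ⟨e2⟩ := ih I₂ hlt
    obtain ⟨e1⟩ := simple_iso_mapIdeal τ hτ hT
    have hmap : mapIdeal τ I = mapIdeal τ T ⊔ mapIdeal τ I₂ := by
      rw [hIeq, mapIdeal_sup]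
    have hdisj' : Disjoint (mapIdeal τ T) (mapIdeal τ I₂) := by
      rw [disjoint_iff, ← mapIdeal_inf, disjoint_iff.mp hdisj, mapIdeal_bot]
    exact ⟨(LinearEquiv.ofEq _ _ hIeq).trans ((equivOfDisjoint hdisj).symm.trans
      ((e1.prodCongr e2).trans ((equivOfDisjoint hdisj').trans
        (LinearEquiv.ofEq _ _ hmap.symm))))⟩

end Central

section Main
variable {A : Type*} [Ring A] [Fintype A] [IsSemisimpleRing A]

lemma autoMulRight (g : A ≃ₗ[A] A) : ∃ u : Aˣ, ∀ z, g z = z * u := by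
  have hg : ∀ z, g z = z * g 1 := by
    intro z
    have : g z = g (z • 1) := by rw [smul_eq_mul, mul_one]
    rw [this, map_smul, smul_eq_mul]
  have hg' : ∀ z, g.symm z = z * g.symm 1 := by
    intro z
    have : g.symm z = g.symm (z • 1) := by rw [smul_eq_mul, mul_one]
    rw [this, map_smul, smul_eq_mul]
  refine ⟨⟨g 1, g.symm 1, ?_, ?_⟩, hg⟩
  · have := hg' (g 1)
    rw [g.symm_apply_apply] at this
    exact this.symm
  · have := hg (g.symm 1)
    rw [g.apply_symm_apply] at this
    exact this.symm

lemma main1 (τ : A ≃+* A) (hτ : ∀ z : A, (∀ x, z * x = x * z) → τ z = z) (b : A) :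
    ∃ v : Aˣ, Ideal.span {b * (v : A)} = Ideal.span {τ b} := by
  set I := Ideal.span ({b} : Set A) with hI
  obtain ⟨C, hC⟩ := exists_isCompl I
  obtain ⟨f₁⟩ := iso_mapIdeal_self τ hτ I
  obtain ⟨f₂⟩ := iso_mapIdeal_self τ hτ C
  have hC' : IsCompl (mapIdeal τ I) (mapIdeal τ C) := mapIdeal_isCompl τ hC
  set g : A ≃ₗ[A] A :=
    (Submodule.prodEquivOfIsCompl I C hC).symm.trans
      ((f₁.prodCongr f₂).trans (Submodule.prodEquivOfIsCompl _ _ hC')) with hgdef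
  obtain ⟨v, hv⟩ := autoMulRight g
  have hgmem : ∀ z ∈ I, g z ∈ mapIdeal τ I := by
    intro z hz
    have : g z = ((f₁ ⟨z, hz⟩ : ↥(mapIdeal τ I)) : A) := by
      rw [hgdef]
      simp only [LinearEquiv.trans_apply]
      have hsym : (Submodule.prodEquivOfIsCompl I C hC).symm z
          = ((⟨z, hz⟩ : ↥I), (0 : ↥C)) :=
        Submodule.prodEquivOfIsCompl_symm_apply_left I C hC (⟨z, hz⟩ : ↥I)
      rw [hsym]
      simp
    rw [this]
    exact (f₁ ⟨z, hz⟩).2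
  have hgmem' : ∀ w ∈ mapIdeal τ I, g.symm w ∈ I := by
    intro w hw
    have : g.symm w = ((f₁.symm ⟨w, hw⟩ : ↥I) : A) := by
      rw [hgdef]
      simp only [LinearEquiv.trans_symm, LinearEquiv.trans_apply]
      have hsym : (Submodule.prodEquivOfIsCompl (mapIdeal τ I) (mapIdeal τ C) hC').symm w
          = ((⟨w, hw⟩ : ↥(mapIdeal τ I)), (0 : ↥(mapIdeal τ C))) :=
        Submodule.prodEquivOfIsCompl_symm_apply_left (mapIdeal τ I) (mapIdeal τ C) hC' (⟨w, hw⟩ : ↥(mapIdeal τ I))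
      rw [hsym]
      simp [LinearEquiv.prodCongr_symm, LinearEquiv.prodCongr_apply]
    rw [this]
    exact (f₁.symm ⟨w, hw⟩).2
  refine ⟨v, ?_⟩
  have hbv : b * (v : A) = g b := (hv b).symm
  rw [← mapIdeal_span_singleton τ b, ← hI]
  apply le_antisymm
  · rw [span_single_le, hbv]
    exact hgmem b (Ideal.subset_span rfl)
  · intro w hw
    have hz : g.symm w ∈ I := hgmem' w hw
    obtain ⟨a, ha⟩ := mem_span_single.mp hz
    have : w = g (g.symm w) := (g.apply_symm_apply w).symm
    rw [this, hv (g.symm w), ← ha]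
    refine mem_span_single.mpr ⟨a, ?_⟩
    rw [mul_assoc]

lemma main2 (τ : A ≃+* A) (hτ : ∀ z : A, (∀ x, z * x = x * z) → τ z = z) (x y c d : A)
    (hc : y = x * c) (hd : x = y * d)
    (h3 : Ideal.span {y} = mapIdeal τ (Ideal.span {x})) :
    ∃ u : Aˣ, y = x * u := by
  set I := Ideal.span ({x} : Set A) with hI
  set J := Ideal.span ({y} : Set A) with hJ
  have hxcd : x * (c * d) = x := by rw [← mul_assoc, ← hc, ← hd]
  have hycd : y * (d * c) = y := by rw [← mul_assoc, ← hd, ← hc]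
  have hmemc : ∀ z ∈ I, z * c ∈ J := by
    intro z hz
    obtain ⟨a, ha⟩ := mem_span_single.mp hz
    refine mem_span_single.mpr ⟨a, ?_⟩
    rw [← ha, mul_assoc, ← hc]
  have hmemd : ∀ z ∈ J, z * d ∈ I := by
    intro z hz
    obtain ⟨a, ha⟩ := mem_span_single.mp hz
    refine mem_span_single.mpr ⟨a, ?_⟩
    rw [← ha, mul_assoc, ← hd]
  set φ : ↥I →ₗ[A] ↥J :=
    { toFun := fun z => ⟨z.1 * c, hmemc z.1 z.2⟩
      map_add' := by intro z w; ext; exact add_mul _ _ _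
      map_smul' := by intro r z; ext; exact mul_assoc _ _ _ } with hφ
  set ψ : ↥J →ₗ[A] ↥I :=
    { toFun := fun z => ⟨z.1 * d, hmemd z.1 z.2⟩
      map_add' := by intro z w; ext; exact add_mul _ _ _
      map_smul' := by intro r z; ext; exact mul_assoc _ _ _ } with hψ
  have hψφ : ∀ z : ↥I, ψ (φ z) = z := by
    rintro ⟨z, hz⟩
    obtain ⟨a, ha⟩ := mem_span_single.mp hz
    ext
    show z * c * d = z
    rw [← ha, mul_assoc, mul_assoc, hxcd]
  have hφψ : ∀ z : ↥J, φ (ψ z) = z := by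
    rintro ⟨z, hz⟩
    obtain ⟨a, ha⟩ := mem_span_single.mp hz
    ext
    show z * d * c = z
    rw [← ha, mul_assoc, mul_assoc, hycd]
  set h₀ : ↥I ≃ₗ[A] ↥J :=
    { φ with
      invFun := ψ
      left_inv := hψφ
      right_inv := hφψ } with hh₀
  obtain ⟨C, hC⟩ := exists_isCompl I
  obtain ⟨f₂⟩ := iso_mapIdeal_self τ hτ C
  have hC' : IsCompl (mapIdeal τ I) (mapIdeal τ C) := mapIdeal_isCompl τ hC
  have hC'' : IsCompl J (mapIdeal τ C) := by rw [h3]; exact hC'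
  set g : A ≃ₗ[A] A :=
    (Submodule.prodEquivOfIsCompl I C hC).symm.trans
      ((h₀.prodCongr f₂).trans (Submodule.prodEquivOfIsCompl _ _ hC'')) with hgdef
  obtain ⟨u, hu⟩ := autoMulRight g
  refine ⟨u, ?_⟩
  have hgx : g x = y := by
    rw [hgdef]
    simp only [LinearEquiv.trans_apply]
    have hsym : (Submodule.prodEquivOfIsCompl I C hC).symm x
        = ((⟨x, Ideal.subset_span rfl⟩ : ↥I), (0 : ↥C)) :=
      Submodule.prodEquivOfIsCompl_symm_apply_left I C hC (⟨x, Ideal.subset_span rfl⟩ : ↥I)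
    rw [hsym]
    simp only [LinearEquiv.prodCongr_apply, map_zero, Submodule.coe_prodEquivOfIsCompl',
      ZeroMemClass.coe_zero, add_zero]
    exact hc.symm
  rw [← hgx, hu x]

end Main

lemma span_unit_mul {A : Type*} [Ring A] (u : Aˣ) (z : A) :
    Ideal.span {(u : A) * z} = Ideal.span {z} := by
  apply le_antisymm
  · exact span_single_le.mpr (mem_span_single.mpr ⟨u, rfl⟩)
  · refine span_single_le.mpr (mem_span_single.mpr ⟨(↑u⁻¹ : A), ?_⟩)
    show (↑u⁻¹ : A) * ((u : A) * z) = z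
    rw [← mul_assoc, u.inv_mul, one_mul]

section Key
variable {R : Type*} [Ring R] [Fintype R] [DecidableEq R] [IsSemisimpleRing R]
variable (χ : AddChar R ℂˣ) (hχ : ∀ ψ : AddChar R ℂˣ, ∃ r : R, ∀ x : R, ψ x = χ (x * r))
include hχ

lemma key (b : R) : ∃ u v : Rˣ, sig χ hχ b = (u : R) * (b * (v : R)) := by
  haveI : Fintype Rᵐᵒᵖ := Fintype.ofEquiv R (MulOpposite.opEquiv : R ≃ Rᵐᵒᵖ)
  haveI : IsSemisimpleRing Rᵐᵒᵖ := ss_mop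
  set σe : R ≃+* R := sigEquiv χ hχ with hσe
  have hτ : ∀ z : R, (∀ x, z * x = x * z) → σe z = z := fun z hz => sig_central χ hχ hz
  obtain ⟨v, hv⟩ := main1 σe hτ b
  have hm1 : (sig χ hχ b) ∈ Ideal.span {b * (v : R)} := by
    rw [hv]; exact Ideal.subset_span rfl
  obtain ⟨c, hc⟩ := mem_span_single.mp hm1
  have hm2 : b * (v : R) ∈ Ideal.span {sig χ hχ b} := by
    rw [show Ideal.span {sig χ hχ b} = Ideal.span {b * (v:R)} from hv.symm]
    exact Ideal.subset_span rfl
  obtain ⟨d, hd⟩ := mem_span_single.mp hm2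
  -- move to the opposite ring
  set τ' : Rᵐᵒᵖ ≃+* Rᵐᵒᵖ := RingEquiv.op σe with hτ'def
  have hτ'apply : ∀ z : R, τ' (MulOpposite.op z) = MulOpposite.op (σe z) := fun z => rfl
  have hτ' : ∀ z : Rᵐᵒᵖ, (∀ x, z * x = x * z) → τ' z = z := by
    intro z hz
    have hcen : ∀ x : R, z.unop * x = x * z.unop := by
      intro x
      have := hz (MulOpposite.op x)
      have h2 := congrArg MulOpposite.unop this
      simpa using h2.symm
    have : τ' (MulOpposite.op z.unop) = MulOpposite.op (σe z.unop) := hτ'apply z.unop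
    rw [MulOpposite.op_unop] at this
    rw [this, hτ z.unop hcen, MulOpposite.op_unop]
  have hvu : IsUnit (σe (v : R)) := (v.isUnit).map (σe : R →+* R)
  obtain ⟨vu, hvueq⟩ := hvu
  have h3' : Ideal.span {MulOpposite.op (sig χ hχ b)}
      = mapIdeal τ' (Ideal.span {MulOpposite.op (b * (v : R))}) := by
    rw [mapIdeal_span_singleton]
    have e1 : τ' (MulOpposite.op (b * (v : R))) = MulOpposite.op (σe b * σe (v : R)) := by
      rw [hτ'apply, map_mul]
    rw [e1]
    have e2 : MulOpposite.op (σe b * σe (v : R))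
        = (Units.opEquiv.symm (MulOpposite.op vu) : Rᵐᵒᵖˣ) * MulOpposite.op (σe b) := by
      rw [show ((Units.opEquiv.symm (MulOpposite.op vu) : Rᵐᵒᵖˣ) : Rᵐᵒᵖ)
            = MulOpposite.op (vu : R) from Units.coe_opEquiv_symm _, hvueq]
      rfl
    rw [e2, span_unit_mul]
    rfl
  obtain ⟨ub, hub⟩ := main2 τ' hτ' (MulOpposite.op (b * (v : R))) (MulOpposite.op (sig χ hχ b))
    (MulOpposite.op c) (MulOpposite.op d) (by
      show MulOpposite.op (sig χ hχ b) = MulOpposite.op (b * (v:R)) * MulOpposite.op c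
      rw [← MulOpposite.op_mul, ← hc])
    (by
      show MulOpposite.op (b * (v:R)) = MulOpposite.op (sig χ hχ b) * MulOpposite.op d
      rw [← MulOpposite.op_mul, ← hd])
    h3'
  refine ⟨(Units.opEquiv ub).unop, v, ?_⟩
  apply MulOpposite.op_injective
  rw [MulOpposite.op_mul, Units.coe_unop_opEquiv, MulOpposite.op_unop, ← hub]

end Key

section Sums
variable {R : Type*} [Ring R] [Fintype R] [DecidableEq R]
variable (χ : AddChar R ℂˣ) (P : Finset R)

lemma sum_left_unit
    (hP : ∀ u : Rˣ, P.image (fun a => (u : R) * a) = P ∧ P.image (fun a => a * (u : R)) = P)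
    (u : Rˣ) (b : R) :
    ∑ a ∈ P, ((χ (a * ((u : R) * b)) : ℂˣ) : ℂ) = ∑ a ∈ P, ((χ (a * b) : ℂˣ) : ℂ) := by
  conv_lhs => rw [← (hP u⁻¹).2]
  rw [Finset.sum_image (fun a _ a' _ h => by
    have h2 := congrArg (fun z => z * (u : R)) h
    simpa using h2)]
  refine Finset.sum_congr rfl (fun a _ => ?_)
  have hred : (↑u⁻¹ : R) * ((u : R) * b) = b := by
    rw [← mul_assoc, u.inv_mul, one_mul]
  rw [mul_assoc, hred]

lemma sum_right_unit (u : Rˣ)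
    (hP : ∀ u : Rˣ, P.image (fun a => (u : R) * a) = P ∧ P.image (fun a => a * (u : R)) = P)
    (b : R) :
    ∑ a ∈ P, ((χ ((b * (u : R)) * a) : ℂˣ) : ℂ) = ∑ a ∈ P, ((χ (b * a) : ℂˣ) : ℂ) := by
  conv_lhs => rw [← (hP u⁻¹).1]
  rw [Finset.sum_image (fun a _ a' _ h => by
    have h2 := congrArg (fun z => (u : R) * z) h
    simpa using h2)]
  refine Finset.sum_congr rfl (fun a _ => ?_)
  have hred : (u : R) * ((↑u⁻¹ : R) * a) = a := by
    rw [← mul_assoc, u.mul_inv, one_mul]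
  rw [mul_assoc, hred]

lemma sum_sig (hχ : ∀ ψ : AddChar R ℂˣ, ∃ r : R, ∀ x : R, ψ x = χ (x * r)) (b : R) :
    ∑ a ∈ P, ((χ (b * a) : ℂˣ) : ℂ) = ∑ a ∈ P, ((χ (a * sig χ hχ b) : ℂˣ) : ℂ) :=
  Finset.sum_congr rfl (fun a _ => by rw [sig_spec χ hχ b a])

end Sums
end KrawAux

theorem krawtchouk_sums_symmetric_of_invariant_semisimple
    {R : Type*} [Ring R] [Fintype R] [DecidableEq R] [IsSemisimpleRing R]
    (χ : AddChar R ℂˣ)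
    (hχ : ∀ ψ : AddChar R ℂˣ, ∃ r : R, ∀ x : R, ψ x = χ (x * r))
    (P : Finset R)
    (hP : ∀ u : Rˣ, P.image (fun a => (u : R) * a) = P ∧ P.image (fun a => a * (u : R)) = P)
    (b : R) :
    ∑ a ∈ P, ((χ (a * b) : ℂˣ) : ℂ) = ∑ a ∈ P, ((χ (b * a) : ℂˣ) : ℂ) := by
  obtain ⟨u, v, huv⟩ := KrawAux.key χ hχ b
  have E4 : ∀ (c : R) (w : Rˣ),
      ∑ a ∈ P, ((χ (a * (c * (w : R))) : ℂˣ) : ℂ) = ∑ a ∈ P, ((χ (a * c) : ℂˣ) : ℂ) := by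
    intro c w
    set σe : R ≃+* R := KrawAux.sigEquiv χ hχ with hσe
    set b' : R := σe.symm c with hb'
    set w' : Rˣ := Units.map (σe.symm : R →+* R).toMonoidHom w with hw'
    have hcw : c * (w : R) = KrawAux.sig χ hχ (b' * (w' : R)) := by
      have h1 : σe b' = c := σe.apply_symm_apply c
      have h2 : σe (w' : R) = (w : R) := by
        rw [hw']
        exact σe.apply_symm_apply (w : R)
      have : σe (b' * (w' : R)) = c * (w : R) := by rw [map_mul, h1, h2]
      rw [← this]; rfl
    rw [hcw, ← KrawAux.sum_sig χ P hχ (b' * (w' : R)),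
      KrawAux.sum_right_unit χ P w' hP b',
      KrawAux.sum_sig χ P hχ b']
    have h1 : σe b' = c := σe.apply_symm_apply c
    have : KrawAux.sig χ hχ b' = c := h1
    rw [this]
  have h1 := KrawAux.sum_sig χ P hχ b
  rw [h1, huv, KrawAux.sum_left_unit χ P hP u (b * (v : R)), E4 b v]
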